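/- For every three integers r, t, n with 2 ≤ r ≤ t ≤ 2r ≤ n−2, there exists a connected graph G of order n with metric dimension dim(G) = r and edge metric dimension edim(G) = t. -/

import Mathlib

open SimpleGraph

/-- Distance from a vertex `v` to an edge `e = uw`: `min (d v u) (d v w)`. -/
noncomputable def edgeDist {V : Type*} (G : SimpleGraph V) (v : V) (e : Sym2 V) : ℕ :=
  Sym2.lift ⟨fun u w => min (G.dist v u) (G.dist v w), fun u w => by simp [min_comm]⟩ e

/-- `S` is an edge metric generator: every two distinct edges are distinguished
by some vertex of `S`. -/
def IsEdgeMetricGenerator {V : Type*} (G : SimpleGraph V) (S : Set V) : Prop :=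
  ∀ e₁ ∈ G.edgeSet, ∀ e₂ ∈ G.edgeSet, e₁ ≠ e₂ →
    ∃ v ∈ S, edgeDist G v e₁ ≠ edgeDist G v e₂

/-- The edge metric dimension: minimum cardinality of an edge metric generator. -/
noncomputable def edim {V : Type*} (G : SimpleGraph V) : ℕ :=
  sInf {k | ∃ S : Finset V, S.card = k ∧ IsEdgeMetricGenerator G ↑S}

/-- `S` is a (vertex) metric generator: every two distinct vertices are
distinguished by some vertex of `S`. -/
def IsMetricGenerator {V : Type*} (G : SimpleGraph V) (S : Set V) : Prop :=
  ∀ u v : V, u ≠ v → ∃ w ∈ S, G.dist w u ≠ G.dist w v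

/-- The metric dimension: minimum cardinality of a metric generator. -/
noncomputable def mdim {V : Type*} (G : SimpleGraph V) : ℕ :=
  sInf {k | ∃ S : Finset V, S.card = k ∧ IsMetricGenerator G ↑S}

set_option linter.unreachableTactic false
set_option linter.unusedTactic false
set_option linter.unnecessarySeqFocus false
set_option linter.unnecessarySimpa false

open Finset


namespace Realization

variable {s p m : ℕ}

/-- Vertex set: trunk (hub = trunk 0 plus pendant path), triangle spokes, leaves. -/
abbrev Vt (s p m : ℕ) : Type := Fin (m+1) ⊕ (Fin s × Bool) ⊕ Fin p

@[match_pattern] def tr (a : Fin (m+1)) : Vt s p m := Sum.inl a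
@[match_pattern] def sp (i : Fin s) (c : Bool) : Vt s p m := Sum.inr (Sum.inl (i, c))
@[match_pattern] def lf (j : Fin p) : Vt s p m := Sum.inr (Sum.inr j)

/-- The intended distance function. -/
def D : Vt s p m → Vt s p m → ℕ
  | tr a, tr b => Nat.dist a b
  | tr a, Sum.inr _ => a + 1
  | Sum.inr _, tr a => a + 1
  | sp i c, sp i' c' => if i = i' then (if c = c' then 0 else 1) else 2
  | sp _ _, lf _ => 2
  | lf _, sp _ _ => 2
  | lf j, lf j' => if j = j' then 0 else 2

lemma D_self (v : Vt s p m) : D v v = 0 := by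
  rcases v with a | ⟨i, c⟩ | j <;> simp [D, tr, sp, lf, Nat.dist]

lemma D_symm (u v : Vt s p m) : D u v = D v u := by
  rcases u with a | ⟨i, c⟩ | j <;> rcases v with b | ⟨i', c'⟩ | j' <;>
    simp only [D, tr, sp, lf, Nat.dist] <;> (try omega) <;>
    split_ifs <;> simp_all <;> omega

lemma D_eq_zero {u v : Vt s p m} (h : D u v = 0) : u = v := by
  rcases u with a | ⟨i, c⟩ | j <;> rcases v with b | ⟨i', c'⟩ | j' <;>
    simp only [D, tr, sp, lf, Nat.dist] at h ⊢ <;>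
    (try split_ifs at h) <;> simp_all <;> (try apply Fin.ext) <;> omega

/-- The graph. -/
def Gr (s p m : ℕ) : SimpleGraph (Vt s p m) where
  Adj u v := D u v = 1
  symm := ⟨fun u v h => by rwa [D_symm]⟩
  loopless := ⟨fun v h => by simp [D_self] at h⟩

lemma adj_iff {u v : Vt s p m} : (Gr s p m).Adj u v ↔ D u v = 1 := Iff.rfl

/-- One can always step from `u` one unit closer to `v`. -/
lemma step {u v : Vt s p m} (h : u ≠ v) :
    ∃ w, D u w = 1 ∧ D w v + 1 = D u v := by
  rcases u with a | ⟨i, c⟩ | j <;> rcases v with b | ⟨i', c'⟩ | j'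
  · -- trunk to trunk
    have hab : a.val ≠ b.val := fun hh => h (by simp [tr, Fin.ext_iff, hh])
    rcases lt_or_gt_of_ne hab with hlt | hgt
    · exact ⟨tr ⟨a.val + 1, by omega⟩, by simp [D, tr, Nat.dist] <;> omega,
        by simp [D, tr, Nat.dist] <;> omega⟩
    · exact ⟨tr ⟨a.val - 1, by omega⟩, by simp [D, tr, Nat.dist] <;> omega,
        by simp [D, tr, Nat.dist] <;> omega⟩
  · -- trunk to spoke
    rcases Nat.eq_zero_or_pos a.val with h0 | h1
    · exact ⟨sp i' c', by simp [D, tr, sp, h0], by simp [D, tr, sp, D_self] <;> exact Fin.ext (by simp [h0])⟩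
    · exact ⟨tr ⟨a.val - 1, by omega⟩, by simp [D, tr, Nat.dist] <;> omega,
        by simp [D, tr, sp] <;> omega⟩
  · -- trunk to leaf
    rcases Nat.eq_zero_or_pos a.val with h0 | h1
    · exact ⟨lf j', by simp [D, tr, lf, h0], by simp [D, tr, lf, D_self] <;> exact Fin.ext (by simp [h0])⟩
    · exact ⟨tr ⟨a.val - 1, by omega⟩, by simp [D, tr, Nat.dist] <;> omega,
        by simp [D, tr, lf] <;> omega⟩
  · -- spoke to trunk
    exact ⟨tr 0, by simp [D, tr, sp], by simp [D, tr, sp, Nat.dist]⟩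
  · -- spoke to spoke
    by_cases hi : i = i'
    · subst hi
      have hc : c ≠ c' := fun hh => h (by simp [sp, hh])
      exact ⟨sp i c', by simp [D, sp, hc], by simp [D, sp, hc]⟩
    · exact ⟨tr 0, by simp [D, tr, sp], by simp [D, tr, sp, hi]⟩
  · -- spoke to leaf
    exact ⟨tr 0, by simp [D, tr, sp], by simp [D, tr, lf]⟩
  · -- leaf to trunk
    exact ⟨tr 0, by simp [D, tr, lf], by simp [D, tr, Nat.dist]⟩
  · -- leaf to spoke
    exact ⟨tr 0, by simp [D, tr, lf], by simp [D, tr, sp]⟩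
  · -- leaf to leaf
    have hj : j ≠ j' := fun hh => h (by simp [lf, hh])
    exact ⟨tr 0, by simp [D, tr, lf], by simp [D, tr, lf, hj]⟩

/-- `D` drops by at most one along an edge. -/
lemma D_lip {u w : Vt s p m} (h : D u w = 1) (v : Vt s p m) :
    D u v ≤ D w v + 1 := by
  rcases u with a | ⟨i, c⟩ | j <;> rcases w with b | ⟨i', c'⟩ | j' <;>
    rcases v with e | ⟨i'', c''⟩ | j'' <;>
    simp_all only [D, tr, sp, lf, Nat.dist] <;> (try omega) <;>
    split_ifs at * <;> simp_all <;> omega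

end Realization

namespace Realization
variable {s p m : ℕ}

lemma reach_and_dist_le (u v : Vt s p m) :
    (Gr s p m).Reachable u v ∧ (Gr s p m).dist u v ≤ D u v := by
  generalize hk : D u v = k
  induction k using Nat.strong_induction_on generalizing u with
  | _ k ih =>
    by_cases huv : u = v
    · subst huv
      refine ⟨Reachable.refl u, ?_⟩
      rw [← hk, D_self, SimpleGraph.dist_self]
    · obtain ⟨w, hw1, hw2⟩ := step huv
      have hk' : D w v < k := by omega
      obtain ⟨hr, hd⟩ := ih (D w v) hk' w rfl
      have hadj : (Gr s p m).Adj u w := hw1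
      refine ⟨hadj.reachable.trans hr, ?_⟩
      obtain ⟨q, hq⟩ := hr.exists_walk_length_eq_dist
      have := SimpleGraph.dist_le (Walk.cons hadj q)
      simp only [Walk.length_cons] at this
      omega

lemma D_le_length {u v : Vt s p m} (q : (Gr s p m).Walk u v) : D u v ≤ q.length := by
  induction q with
  | nil => simp [D_self]
  | @cons a b c hadj q ih =>
    have := D_lip (hadj : D a b = 1) c
    simp only [Walk.length_cons]
    omega

lemma dist_eq (u v : Vt s p m) : (Gr s p m).dist u v = D u v := by
  obtain ⟨hr, hle⟩ := reach_and_dist_le u v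
  obtain ⟨q, hq⟩ := hr.exists_walk_length_eq_dist
  have := D_le_length q
  omega

lemma connected : (Gr s p m).Connected := by
  rw [connected_iff]
  exact ⟨fun u v => (reach_and_dist_le u v).1, ⟨tr 0⟩⟩

lemma card_Vt : Fintype.card (Vt s p m) = m + 1 + 2 * s + p := by
  simp [Fintype.card_sum, Fintype.card_prod]
  ring

end Realization

namespace Realization
variable {s p m : ℕ}


lemma cases_Vt (v : Vt s p m) :
    (∃ a, v = tr a) ∨ (∃ i c, v = sp i c) ∨ (∃ j, v = lf j) := by
  rcases v with a | ⟨i, c⟩ | j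
  · exact Or.inl ⟨a, rfl⟩
  · exact Or.inr (Or.inl ⟨i, c, rfl⟩)
  · exact Or.inr (Or.inr ⟨j, rfl⟩)

/-- The vertex metric generator: one spoke per triangle plus all leaves. -/
def Sdim (s p m : ℕ) : Finset (Vt s p m) :=
  (univ.image fun i : Fin s => sp i false) ∪ (univ.image lf)

lemma sp_mem_Sdim (i : Fin s) : sp (m := m) (p := p) i false ∈ Sdim s p m := by
  simp only [Sdim, mem_union, mem_image, mem_univ, true_and]
  exact Or.inl ⟨i, rfl⟩

lemma lf_mem_Sdim (j : Fin p) : lf (m := m) (s := s) j ∈ Sdim s p m := by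
  simp only [Sdim, mem_union, mem_image, mem_univ, true_and]
  exact Or.inr ⟨j, rfl⟩

lemma mem_Sdim {z : Vt s p m} (hz : z ∈ Sdim s p m) :
    (∃ i, z = sp i false) ∨ (∃ j, z = lf j) := by
  simp [Sdim] at hz
  rcases hz with ⟨i, hi⟩ | ⟨j, hj⟩
  · exact Or.inl ⟨i, hi.symm⟩
  · exact Or.inr ⟨j, hj.symm⟩

lemma card_Sdim : (Sdim s p m).card = s + p := by
  rw [Sdim, card_union_of_disjoint, card_image_of_injective, card_image_of_injective]
  · simp
  · intro a b h; simpa [lf] using h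
  · intro a b h; simpa [sp] using h
  · simp only [Finset.disjoint_left, mem_image, mem_univ, true_and]
    rintro z ⟨i, rfl⟩ ⟨j, hj⟩
    simp [sp, lf] at hj

lemma D_Sdim_tr {z : Vt s p m} (hz : z ∈ Sdim s p m) (a : Fin (m+1)) :
    D z (tr a) = a + 1 := by
  rcases mem_Sdim hz with ⟨i, rfl⟩ | ⟨j, rfl⟩ <;> simp [D, tr, sp, lf]

lemma D_Sdim_spT {z : Vt s p m} (hz : z ∈ Sdim s p m) {i : Fin s}
    (hne : z ≠ sp i false) : D z (sp i true) = 2 := by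
  rcases mem_Sdim hz with ⟨i', rfl⟩ | ⟨j, rfl⟩
  · have : i' ≠ i := fun h => hne (by rw [h])
    simp [D, sp, this]
  · simp [D, sp, lf]

lemma D_Sdim_lf {z : Vt s p m} (hz : z ∈ Sdim s p m) {j : Fin p}
    (hne : z ≠ lf j) : D z (lf j) = 2 := by
  rcases mem_Sdim hz with ⟨i', rfl⟩ | ⟨j', rfl⟩
  · simp [D, sp, lf]
  · have : j' ≠ j := fun h => hne (by rw [h])
    simp [D, lf, this]

lemma Sdim_gen (hsp : 2 ≤ s + p) : IsMetricGenerator (Gr s p m) ↑(Sdim s p m) := by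
  have hcard : 1 < (Sdim s p m).card := by rw [card_Sdim]; omega
  intro u v huv
  simp only [Finset.mem_coe]
  rcases cases_Vt u with ⟨a, rfl⟩ | ⟨i, c, rfl⟩ | ⟨j, rfl⟩ <;>
    rcases cases_Vt v with ⟨b, rfl⟩ | ⟨i', c', rfl⟩ | ⟨j', rfl⟩
  · -- trunk, trunk
    obtain ⟨z, hz, -⟩ := Finset.exists_mem_ne hcard (tr 0)
    refine ⟨z, hz, ?_⟩
    rw [dist_eq, dist_eq, D_Sdim_tr hz, D_Sdim_tr hz]
    have : a.val ≠ b.val := fun h => huv (by simp [tr, Fin.ext_iff, h])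
    omega
  · -- trunk, spoke
    cases c'
    · exact ⟨sp i' false, sp_mem_Sdim i', by
        rw [dist_eq, dist_eq, D_Sdim_tr (sp_mem_Sdim i'), D_self]; omega⟩
    · rcases Nat.eq_zero_or_pos a.val with h0 | h1
      · obtain ⟨z, hz, hzne⟩ := Finset.exists_mem_ne hcard (sp i' false)
        refine ⟨z, hz, ?_⟩
        rw [dist_eq, dist_eq, D_Sdim_tr hz, D_Sdim_spT hz hzne]
        omega
      · refine ⟨sp i' false, sp_mem_Sdim i', ?_⟩
        rw [dist_eq, dist_eq, D_Sdim_tr (sp_mem_Sdim i')]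
        simp [D, sp]
        exact fun h => by simp [h] at h1
  · -- trunk, leaf
    refine ⟨lf j', lf_mem_Sdim j', ?_⟩
    rw [dist_eq, dist_eq, D_Sdim_tr (lf_mem_Sdim j'), D_self]; omega
  · -- spoke, trunk
    cases c
    · exact ⟨sp i false, sp_mem_Sdim i, by
        rw [dist_eq, dist_eq, D_Sdim_tr (sp_mem_Sdim i), D_self]; omega⟩
    · rcases Nat.eq_zero_or_pos b.val with h0 | h1
      · obtain ⟨z, hz, hzne⟩ := Finset.exists_mem_ne hcard (sp i false)
        refine ⟨z, hz, ?_⟩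
        rw [dist_eq, dist_eq, D_Sdim_tr hz, D_Sdim_spT hz hzne]
        omega
      · refine ⟨sp i false, sp_mem_Sdim i, ?_⟩
        rw [dist_eq, dist_eq, D_Sdim_tr (sp_mem_Sdim i)]
        simp [D, sp]
        exact fun h => by simp [h] at h1
  · -- spoke, spoke
    by_cases hi : i = i'
    · subst hi
      have hc : c ≠ c' := fun h => huv (by simp [sp, h])
      refine ⟨sp i false, sp_mem_Sdim i, ?_⟩
      rw [dist_eq, dist_eq]
      cases c <;> cases c' <;> simp_all [D, sp]
    · refine ⟨sp i false, sp_mem_Sdim i, ?_⟩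
      rw [dist_eq, dist_eq]
      cases c <;> simp [D, sp, hi]
  · -- spoke, leaf
    refine ⟨lf j', lf_mem_Sdim j', ?_⟩
    rw [dist_eq, dist_eq, D_self]
    simp [D, sp, lf]
  · -- leaf, trunk
    refine ⟨lf j, lf_mem_Sdim j, ?_⟩
    rw [dist_eq, dist_eq, D_self, D_Sdim_tr (lf_mem_Sdim j)]; omega
  · -- leaf, spoke
    refine ⟨lf j, lf_mem_Sdim j, ?_⟩
    rw [dist_eq, dist_eq, D_self]
    simp [D, sp, lf]
  · -- leaf, leaf
    have hj : j ≠ j' := fun h => huv (by simp [lf, h])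
    refine ⟨lf j, lf_mem_Sdim j, ?_⟩
    rw [dist_eq, dist_eq, D_self]
    simp [D, lf, hj]

end Realization

namespace Realization
variable {s p m : ℕ}

/-- Only the two spokes of triangle `i` distinguish them. -/
lemma twin_sp {v : Vt s p m} (i : Fin s) (h1 : v ≠ sp i false) (h2 : v ≠ sp i true) :
    D v (sp i false) = D v (sp i true) := by
  rcases cases_Vt v with ⟨a, rfl⟩ | ⟨i', c', rfl⟩ | ⟨j, rfl⟩
  · simp [D, tr, sp]
  · by_cases hi : i' = i
    · subst hi
      cases c'
      · exact absurd rfl h1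
      · exact absurd rfl h2
    · simp [D, sp, hi]
  · simp [D, sp, lf]

/-- Only the two leaves distinguish them. -/
lemma twin_lf {v : Vt s p m} (j j' : Fin p) (h1 : v ≠ lf j) (h2 : v ≠ lf j') :
    D v (lf j) = D v (lf j') := by
  rcases cases_Vt v with ⟨a, rfl⟩ | ⟨i', c', rfl⟩ | ⟨j'', rfl⟩
  · simp [D, tr, lf]
  · simp [D, sp, lf]
  · have hj : j'' ≠ j := fun h => h1 (by rw [h])
    have hj' : j'' ≠ j' := fun h => h2 (by rw [h])
    simp [D, lf, hj, hj']

/-- Only leaf `j` and proper path vertices distinguish leaf `j` from the first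
path vertex. -/
lemma leaf_vs_path {v : Vt s p m} (hm : 1 ≤ m) (j : Fin p) (h1 : v ≠ lf j)
    (h2 : ∀ a : Fin (m+1), 1 ≤ a.val → v ≠ tr a) :
    D v (lf j) = D v (tr ⟨1, by omega⟩) := by
  rcases cases_Vt v with ⟨a, rfl⟩ | ⟨i', c', rfl⟩ | ⟨j'', rfl⟩
  · have ha : a.val = 0 := by
      by_contra h
      exact h2 a (by omega) rfl
    simp [D, tr, lf, Nat.dist, ha]
  · simp [D, sp, lf, tr]
  · have hj : j'' ≠ j := fun h => h1 (by rw [h])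
    simp [D, lf, tr, hj]

/-- Any metric generator has at least `s + p` elements. -/
lemma mdim_lower (hm : 1 ≤ m) (S : Finset (Vt s p m))
    (hgen : IsMetricGenerator (Gr s p m) ↑S) : s + p ≤ S.card := by
  classical
  -- triangle representatives
  have hrep : ∀ i : Fin s, sp (m := m) (p := p) i false ∈ S ∨ sp i true ∈ S := by
    intro i
    obtain ⟨w, hw, hne⟩ := hgen (sp i false) (sp i true) (by simp [sp])
    rw [dist_eq, dist_eq] at hne
    by_contra hcon
    push_neg at hcon
    have h1 : w ≠ sp i false := fun h => hcon.1 (h ▸ hw)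
    have h2 : w ≠ sp i true := fun h => hcon.2 (h ▸ hw)
    exact hne (twin_sp i h1 h2)
  set rep : Fin s → Vt s p m := fun i =>
    if sp i false ∈ S then sp i false else sp i true with hrepdef
  have hrepS : ∀ i, rep i ∈ S := by
    intro i
    rcases hrep i with h | h
    · simp [hrepdef, h]
    · by_cases h' : sp i false ∈ S <;> simp [hrepdef, h', h]
  have hrepform : ∀ i, rep i = sp i false ∨ rep i = sp i true := by
    intro i
    by_cases h' : sp i false ∈ S <;> simp [hrepdef, h']
  have hrepinj : Function.Injective rep := by
    intro i i' h
    rcases hrepform i with h1 | h1 <;> rcases hrepform i' with h2 | h2 <;>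
      rw [h1, h2] at h <;> simpa [sp, Prod.ext_iff] using h
  by_cases hall : ∀ j : Fin p, lf (m := m) (s := s) j ∈ S
  · -- all leaves present
    have hsub : (univ.image rep ∪ univ.image lf) ⊆ S := by
      intro z hz
      simp only [mem_union, mem_image, mem_univ, true_and] at hz
      rcases hz with ⟨i, rfl⟩ | ⟨j, rfl⟩
      · exact hrepS i
      · exact hall j
    have := card_le_card hsub
    rw [card_union_of_disjoint, card_image_of_injective _ hrepinj,
      card_image_of_injective] at this
    · simpa using this
    · intro a b h; simpa [lf] using h
    · simp only [Finset.disjoint_left, mem_image, mem_univ, true_and]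
      rintro z ⟨i, rfl⟩ ⟨j, hj⟩
      rcases hrepform i with h1 | h1 <;> rw [h1] at hj <;> simp [sp, lf] at hj
  · -- a leaf is missing; the other leaves and a path vertex are present
    push_neg at hall
    obtain ⟨j0, hj0⟩ := hall
    have hp : 1 ≤ p := Nat.pos_of_ne_zero (fun h => (h ▸ j0).elim0)
    have hleaves : ∀ j : Fin p, j ≠ j0 → lf (m := m) (s := s) j ∈ S := by
      intro j hj
      obtain ⟨w, hw, hne⟩ := hgen (lf j) (lf j0) (by simp [lf, hj])
      rw [dist_eq, dist_eq] at hne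
      by_contra hcon
      have h1 : w ≠ lf j := fun h => hcon (h ▸ hw)
      have h2 : w ≠ lf j0 := fun h => hj0 (h ▸ hw)
      exact hne (twin_lf j j0 h1 h2)
    obtain ⟨w0, hw0S, hw0⟩ : ∃ w0 ∈ S, ∃ a : Fin (m+1), 1 ≤ a.val ∧ w0 = tr a := by
      obtain ⟨w, hw, hne⟩ := hgen (lf j0) (tr ⟨1, by omega⟩) (by simp [lf, tr])
      rw [dist_eq, dist_eq] at hne
      by_contra hcon
      push_neg at hcon
      have h1 : w ≠ lf j0 := fun h => hj0 (h ▸ hw)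
      have h2 : ∀ a : Fin (m+1), 1 ≤ a.val → w ≠ tr a := by
        intro a ha hwa
        exact hcon w hw a ha hwa
      exact hne (leaf_vs_path hm j0 h1 h2)
    obtain ⟨a0, ha0, rfl⟩ := hw0
    have hsub : (univ.image rep ∪ (univ.erase j0).image lf ∪ {tr a0}) ⊆ S := by
      intro z hz
      simp only [mem_union, mem_image, mem_univ, mem_erase, true_and,
        mem_singleton] at hz
      rcases hz with (⟨i, rfl⟩ | ⟨j, hj, rfl⟩) | rfl
      · exact hrepS i
      · exact hleaves j hj.1
      · exact hw0S
    have hcard := card_le_card hsub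
    rw [card_union_of_disjoint, card_union_of_disjoint,
      card_image_of_injective _ hrepinj, card_image_of_injective,
      card_singleton, card_erase_of_mem (mem_univ j0)] at hcard
    · simp only [card_univ, Fintype.card_fin] at hcard
      omega
    · intro a b h; simpa [lf] using h
    · simp only [Finset.disjoint_left, mem_image, mem_univ, mem_erase, true_and]
      rintro z ⟨i, rfl⟩ ⟨j, hj, hj2⟩
      rcases hrepform i with h1 | h1 <;> rw [h1] at hj2 <;> simp [sp, lf] at hj2
    · simp only [Finset.disjoint_left, mem_union, mem_image, mem_univ, mem_erase,
        true_and, mem_singleton]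
      rintro z (⟨i, rfl⟩ | ⟨j, hj, rfl⟩) hz
      · rcases hrepform i with h1 | h1 <;> rw [h1] at hz <;> simp [sp, tr] at hz
      · simp [lf, tr] at hz

end Realization

namespace Realization
variable {s p m : ℕ}

/-- Spokes and leaves. -/
def Pendant (z : Vt s p m) : Prop := (∃ i c, z = sp i c) ∨ (∃ j, z = lf j)

lemma pendant_sp (i : Fin s) (c : Bool) : Pendant (sp (m := m) (p := p) i c) :=
  Or.inl ⟨i, c, rfl⟩

lemma pendant_lf (j : Fin p) : Pendant (lf (m := m) (s := s) j) :=
  Or.inr ⟨j, rfl⟩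

lemma Pendant.D_tr {z : Vt s p m} (hz : Pendant z) (a : Fin (m+1)) :
    D z (tr a) = a + 1 := by
  rcases hz with ⟨i, c, rfl⟩ | ⟨j, rfl⟩ <;> simp [D, tr, sp, lf]

lemma Pendant.tr_D {z : Vt s p m} (hz : Pendant z) (a : Fin (m+1)) :
    D (tr a) z = a + 1 := by
  rw [D_symm]; exact hz.D_tr a

lemma Pendant.ne_tr {z : Vt s p m} (hz : Pendant z) (a : Fin (m+1)) : z ≠ tr a := by
  rcases hz with ⟨i, c, rfl⟩ | ⟨j, rfl⟩ <;> simp [tr, sp, lf]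

lemma D_pos {u v : Vt s p m} (h : u ≠ v) : 1 ≤ D u v := by
  rcases Nat.eq_zero_or_pos (D u v) with h0 | h1
  · exact absurd (D_eq_zero h0) h
  · exact h1

/-- hub–pendant edges are in the graph. -/
lemma adj_hub_pendant {z : Vt s p m} (hz : Pendant z) : (Gr s p m).Adj (tr 0) z := by
  show D _ _ = 1
  rw [hz.tr_D]
  simp

lemma adj_triangle (i : Fin s) :
    (Gr s p m).Adj (sp (m := m) (p := p) i false) (sp i true) := by
  show D _ _ = 1
  simp [D, sp]

lemma adj_hub_path (hm : 1 ≤ m) :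
    (Gr s p m).Adj (tr 0) (tr ⟨1, by omega⟩) := by
  show D _ _ = 1
  simp [D, tr, Nat.dist]

lemma edgeDist_mk (v u w : Vt s p m) :
    edgeDist (Gr s p m) v s(u, w) = min (D v u) (D v w) := by
  simp [edgeDist, dist_eq]

/-- Classification of the edges. -/
lemma edge_cases {e : Sym2 (Vt s p m)} (he : e ∈ (Gr s p m).edgeSet) :
    (∃ a b : Fin (m+1), e = s(tr a, tr b) ∧ Nat.dist a b = 1) ∨
    (∃ z : Vt s p m, Pendant z ∧ e = s(tr 0, z)) ∨
    (∃ i : Fin s, e = s(sp i false, sp i true)) := by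
  induction e with
  | _ u v =>
    rw [mem_edgeSet] at he
    have hD : D u v = 1 := he
    rcases cases_Vt u with ⟨a, rfl⟩ | ⟨i, c, rfl⟩ | ⟨j, rfl⟩ <;>
      rcases cases_Vt v with ⟨b, rfl⟩ | ⟨i', c', rfl⟩ | ⟨j', rfl⟩
    · exact Or.inl ⟨a, b, rfl, hD⟩
    · -- trunk–spoke: trunk must be the hub
      have ha : a = 0 := by
        simp only [D, tr, sp] at hD
        exact Fin.ext (by simp only [Fin.val_zero]; omega)
      subst ha
      exact Or.inr (Or.inl ⟨sp i' c', pendant_sp i' c', rfl⟩)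
    · have ha : a = 0 := by
        simp only [D, tr, lf] at hD
        exact Fin.ext (by simp only [Fin.val_zero]; omega)
      subst ha
      exact Or.inr (Or.inl ⟨lf j', pendant_lf j', rfl⟩)
    · have hb : b = 0 := by
        simp only [D, tr, sp] at hD
        exact Fin.ext (by simp only [Fin.val_zero]; omega)
      subst hb
      exact Or.inr (Or.inl ⟨sp i c, pendant_sp i c, Sym2.eq_swap⟩)
    · -- spoke–spoke
      by_cases h1 : i = i'
      · subst h1
        by_cases h2 : c = c'
        · simp [D, sp, h2] at hD
        · refine Or.inr (Or.inr ⟨i, ?_⟩)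
          cases c <;> cases c'
          · exact absurd rfl h2
          · rfl
          · exact Sym2.eq_swap
          · exact absurd rfl h2
      · simp [D, sp, h1] at hD
    · simp [D, sp, lf] at hD
    · have hb : b = 0 := by
        simp only [D, tr, lf] at hD
        exact Fin.ext (by simp only [Fin.val_zero]; omega)
      subst hb
      exact Or.inr (Or.inl ⟨lf j, pendant_lf j, Sym2.eq_swap⟩)
    · simp [D, sp, lf] at hD
    · simp only [D, lf] at hD
      split_ifs at hD <;> omega

end Realization

namespace Realization
variable {s p m : ℕ}

/-- The edge metric generator: all spokes and all leaves. -/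
def SE (s p m : ℕ) : Finset (Vt s p m) :=
  (univ.image fun ic : Fin s × Bool => sp ic.1 ic.2) ∪ (univ.image lf)

lemma pendant_mem_SE {z : Vt s p m} (hz : Pendant z) : z ∈ SE s p m := by
  simp only [SE, mem_union, mem_image, mem_univ, true_and]
  rcases hz with ⟨i, c, rfl⟩ | ⟨j, rfl⟩
  · exact Or.inl ⟨(i, c), rfl⟩
  · exact Or.inr ⟨j, rfl⟩

lemma mem_SE {z : Vt s p m} (hz : z ∈ SE s p m) : Pendant z := by
  simp only [SE, mem_union, mem_image, mem_univ, true_and] at hz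
  rcases hz with ⟨⟨i, c⟩, rfl⟩ | ⟨j, rfl⟩
  · exact pendant_sp i c
  · exact pendant_lf j

lemma card_SE : (SE s p m).card = 2 * s + p := by
  rw [SE, card_union_of_disjoint, card_image_of_injective, card_image_of_injective]
  · simp [Fintype.card_prod]; ring
  · intro a b h; simpa [lf] using h
  · intro a b h
    simpa [sp, Prod.ext_iff] using h
  · simp only [Finset.disjoint_left, mem_image, mem_univ, true_and]
    rintro z ⟨⟨i, c⟩, rfl⟩ ⟨j, hj⟩
    simp [sp, lf] at hj

lemma D_pendant_hub {z : Vt s p m} (hz : Pendant z) : D z (tr 0) = 1 := by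
  rw [hz.D_tr]; simp

/-- `SE` is an edge metric generator. -/
lemma SE_gen (hsp : 2 ≤ s + p) : IsEdgeMetricGenerator (Gr s p m) ↑(SE s p m) := by
  have hne0 : (SE s p m).Nonempty := by
    rw [← Finset.card_pos, card_SE]; omega
  intro e1 he1 e2 he2 hne
  simp only [Finset.mem_coe]
  rcases edge_cases he1 with ⟨a, b, rfl, hab⟩ | ⟨z, hz, rfl⟩ | ⟨i, rfl⟩ <;>
    rcases edge_cases he2 with ⟨a', b', rfl, hab'⟩ | ⟨z', hz', rfl⟩ | ⟨i', rfl⟩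
  · -- trunk edge vs trunk edge
    obtain ⟨z0, hz0⟩ := hne0
    have hp0 := mem_SE hz0
    refine ⟨z0, hz0, ?_⟩
    rw [edgeDist_mk, edgeDist_mk, hp0.D_tr, hp0.D_tr, hp0.D_tr, hp0.D_tr]
    have hkey : ¬((a.val = a'.val ∧ b.val = b'.val) ∨ (a.val = b'.val ∧ b.val = a'.val)) := by
      intro hcon
      apply hne
      rcases hcon with ⟨h1, h2⟩ | ⟨h1, h2⟩
      · rw [Fin.ext h1, Fin.ext h2]
      · rw [Fin.ext h1, Fin.ext h2]
        exact Sym2.eq_swap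
    simp only [Nat.dist] at hab hab'
    omega
  · -- trunk edge vs hub–pendant
    refine ⟨z', pendant_mem_SE hz', ?_⟩
    simp only [edgeDist_mk, hz'.D_tr, D_self, Fin.val_zero]
    omega
  · -- trunk edge vs triangle
    refine ⟨sp i' false, pendant_mem_SE (pendant_sp i' false), ?_⟩
    simp only [edgeDist_mk, (pendant_sp i' false).D_tr, D_self, Fin.val_zero]
    omega
  · -- hub–pendant vs trunk edge
    refine ⟨z, pendant_mem_SE hz, ?_⟩
    simp only [edgeDist_mk, hz.D_tr, D_self, Fin.val_zero]
    omega
  · -- hub–pendant vs hub–pendant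
    have hzz : z ≠ z' := by
      rintro rfl; exact hne rfl
    refine ⟨z, pendant_mem_SE hz, ?_⟩
    rw [edgeDist_mk, edgeDist_mk, D_self, D_pendant_hub hz]
    have := D_pos hzz
    omega
  · -- hub–pendant vs triangle
    by_cases hzi : z = sp i' false ∨ z = sp i' true
    · -- use the partner spoke
      rcases hzi with rfl | rfl
      · refine ⟨sp i' true, pendant_mem_SE (pendant_sp i' true), ?_⟩
        rw [edgeDist_mk, edgeDist_mk, D_pendant_hub (pendant_sp i' true), D_self]
        have h1 : D (sp (m := m) (p := p) i' true) (sp i' false) = 1 := by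
          simp [D, sp]
        rw [h1]
        omega
      · refine ⟨sp i' false, pendant_mem_SE (pendant_sp i' false), ?_⟩
        rw [edgeDist_mk, edgeDist_mk, D_pendant_hub (pendant_sp i' false), D_self]
        have h1 : D (sp (m := m) (p := p) i' false) (sp i' true) = 1 := by
          simp [D, sp]
        rw [h1]
        omega
    · push_neg at hzi
      refine ⟨z, pendant_mem_SE hz, ?_⟩
      rw [edgeDist_mk, edgeDist_mk, D_self, D_pendant_hub hz]
      have h1 := D_pos hzi.1
      have h2 := D_pos hzi.2
      omega
  · -- triangle vs trunk edge
    refine ⟨sp i false, pendant_mem_SE (pendant_sp i false), ?_⟩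
    simp only [edgeDist_mk, (pendant_sp i false).D_tr, D_self, Fin.val_zero]
    omega
  · -- triangle vs hub–pendant
    by_cases hzi : z' = sp i false ∨ z' = sp i true
    · rcases hzi with rfl | rfl
      · refine ⟨sp i true, pendant_mem_SE (pendant_sp i true), ?_⟩
        rw [edgeDist_mk, edgeDist_mk, D_pendant_hub (pendant_sp i true), D_self]
        have h1 : D (sp (m := m) (p := p) i true) (sp i false) = 1 := by
          simp [D, sp]
        rw [h1]
        omega
      · refine ⟨sp i false, pendant_mem_SE (pendant_sp i false), ?_⟩
        rw [edgeDist_mk, edgeDist_mk, D_pendant_hub (pendant_sp i false), D_self]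
        have h1 : D (sp (m := m) (p := p) i false) (sp i true) = 1 := by
          simp [D, sp]
        rw [h1]
        omega
    · push_neg at hzi
      refine ⟨z', pendant_mem_SE hz', ?_⟩
      rw [edgeDist_mk, edgeDist_mk, D_self, D_pendant_hub hz']
      have h1 := D_pos hzi.1
      have h2 := D_pos hzi.2
      omega
  · -- triangle vs triangle
    have hii : i ≠ i' := by
      rintro rfl; exact hne rfl
    refine ⟨sp i false, pendant_mem_SE (pendant_sp i false), ?_⟩
    rw [edgeDist_mk, edgeDist_mk, D_self]
    have h1 : D (sp (m := m) (p := p) i false) (sp i' false) = 2 := by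
      simp [D, sp, hii]
    have h2 : D (sp (m := m) (p := p) i false) (sp i' true) = 2 := by
      simp [D, sp, hii]
    rw [h1, h2]
    omega

end Realization

namespace Realization
variable {s p m : ℕ}

lemma hub_edge_inj {z a0 : Vt s p m} (hz : Pendant z) (ha : Pendant a0)
    (h : s(tr 0, z) = s(tr (s := s) (p := p) 0, a0)) : z = a0 := by
  rw [Sym2.eq_iff] at h
  rcases h with ⟨-, h⟩ | ⟨h1, -⟩
  · exact h
  · exact absurd h1.symm (ha.ne_tr 0)

/-- Only `a` and `b` themselves distinguish the hub edges to pendants `a, b`. -/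
lemma edge_twin {a b : Vt s p m} (ha : Pendant a) (hb : Pendant b) {v : Vt s p m}
    (h1 : v ≠ a) (h2 : v ≠ b) :
    edgeDist (Gr s p m) v s(tr 0, a) = edgeDist (Gr s p m) v s(tr 0, b) := by
  rw [edgeDist_mk, edgeDist_mk]
  rcases cases_Vt v with ⟨c, rfl⟩ | ⟨i, d, rfl⟩ | ⟨j, rfl⟩
  · rw [ha.tr_D, hb.tr_D]
  · have hp : Pendant (sp (m := m) (p := p) i d) := pendant_sp i d
    rw [D_pendant_hub hp]
    have := D_pos h1
    have := D_pos h2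
    omega
  · have hp : Pendant (lf (m := m) (s := s) j) := pendant_lf j
    rw [D_pendant_hub hp]
    have := D_pos h1
    have := D_pos h2
    omega

/-- Only `a` and proper path vertices distinguish the hub edge to `a` from the
first path edge. -/
lemma edge_vs_pathedge {a : Vt s p m} (hm : 1 ≤ m) (ha : Pendant a) {v : Vt s p m}
    (h1 : v ≠ a) (h2 : ∀ b : Fin (m+1), 1 ≤ b.val → v ≠ tr b) :
    edgeDist (Gr s p m) v s(tr 0, a) =
      edgeDist (Gr s p m) v s(tr 0, tr ⟨1, by omega⟩) := by
  rw [edgeDist_mk, edgeDist_mk]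
  rcases cases_Vt v with ⟨c, rfl⟩ | ⟨i, d, rfl⟩ | ⟨j, rfl⟩
  · have hc : c.val = 0 := by
      by_contra h
      exact h2 c (by omega) rfl
    have h3 : D (tr (s := s) (p := p) c) (tr 0) = 0 := by
      simp [D, tr, Nat.dist, hc]
    rw [h3]
    simp
  · have hp : Pendant (sp (m := m) (p := p) i d) := pendant_sp i d
    rw [D_pendant_hub hp, hp.D_tr]
    have := D_pos h1
    omega
  · have hp : Pendant (lf (m := m) (s := s) j) := pendant_lf j
    rw [D_pendant_hub hp, hp.D_tr]
    have := D_pos h1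
    omega

/-- Any edge metric generator has at least `2s + p` elements. -/
lemma edim_lower (hm : 1 ≤ m) (S : Finset (Vt s p m))
    (hgen : IsEdgeMetricGenerator (Gr s p m) ↑S) : 2 * s + p ≤ S.card := by
  classical
  by_cases hall : ∀ z ∈ SE s p m, z ∈ S
  · calc 2 * s + p = (SE s p m).card := card_SE.symm
      _ ≤ S.card := card_le_card hall
  · push_neg at hall
    obtain ⟨a0, ha0SE, ha0S⟩ := hall
    have ha0 : Pendant a0 := mem_SE ha0SE
    have hrest : ∀ z ∈ SE s p m, z ≠ a0 → z ∈ S := by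
      intro z hzSE hza
      have hz : Pendant z := mem_SE hzSE
      have he1 : s(tr (s := s) (p := p) 0, z) ∈ (Gr s p m).edgeSet :=
        ((Gr s p m).mem_edgeSet).mpr (adj_hub_pendant hz)
      have he2 : s(tr (s := s) (p := p) 0, a0) ∈ (Gr s p m).edgeSet :=
        ((Gr s p m).mem_edgeSet).mpr (adj_hub_pendant ha0)
      obtain ⟨w, hwS, hwne⟩ := hgen _ he1 _ he2
        (fun h => hza (hub_edge_inj hz ha0 h))
      by_contra hcon
      have hw1 : w ≠ z := fun h => hcon (h ▸ hwS)
      have hw2 : w ≠ a0 := fun h => ha0S (h ▸ hwS)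
      exact hwne (edge_twin hz ha0 hw1 hw2)
    obtain ⟨b0, hb0, hb0S⟩ : ∃ b : Fin (m+1), 1 ≤ b.val ∧ tr (s := s) (p := p) b ∈ S := by
      have he1 : s(tr (s := s) (p := p) 0, a0) ∈ (Gr s p m).edgeSet :=
        ((Gr s p m).mem_edgeSet).mpr (adj_hub_pendant ha0)
      have he2 : s(tr (s := s) (p := p) 0, tr ⟨1, by omega⟩) ∈ (Gr s p m).edgeSet :=
        ((Gr s p m).mem_edgeSet).mpr (adj_hub_path hm)
      have hne12 : s(tr (s := s) (p := p) 0, a0) ≠ s(tr 0, tr ⟨1, by omega⟩) := by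
        intro hq
        rw [Sym2.eq_iff] at hq
        rcases hq with ⟨-, h⟩ | ⟨h, -⟩
        · exact ha0.ne_tr _ h
        · simp [tr, Fin.ext_iff] at h
      obtain ⟨w, hwS, hwne⟩ := hgen _ he1 _ he2 hne12
      by_contra hcon
      push_neg at hcon
      have hw1 : w ≠ a0 := fun h => ha0S (h ▸ hwS)
      have hw2 : ∀ b : Fin (m+1), 1 ≤ b.val → w ≠ tr b := by
        intro b hb hwb
        exact hcon b hb (hwb ▸ hwS)
      exact hwne (edge_vs_pathedge hm ha0 hw1 hw2)
    have hsub : insert (tr b0) ((SE s p m).erase a0) ⊆ S := by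
      intro z hz
      rcases Finset.mem_insert.mp hz with rfl | hz'
      · exact hb0S
      · exact hrest z (Finset.mem_of_mem_erase hz') (Finset.ne_of_mem_erase hz')
    have hcard := card_le_card hsub
    rw [Finset.card_insert_of_notMem, card_erase_of_mem ha0SE, card_SE] at hcard
    · have hpos : 0 < 2 * s + p := by
        rcases ha0 with ⟨i, c, -⟩ | ⟨j, -⟩
        · have := i.isLt; omega
        · have := j.isLt; omega
      omega
    · intro hmem
      exact (mem_SE (Finset.mem_of_mem_erase hmem)).ne_tr b0 rfl

/-- The metric dimension of the construction. -/
lemma mdim_eq (hm : 1 ≤ m) (hsp : 2 ≤ s + p) : mdim (Gr s p m) = s + p := by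
  have hmem : (s + p) ∈ {k | ∃ S : Finset (Vt s p m),
      S.card = k ∧ IsMetricGenerator (Gr s p m) ↑S} :=
    ⟨Sdim s p m, card_Sdim, Sdim_gen hsp⟩
  apply le_antisymm
  · exact Nat.sInf_le hmem
  · obtain ⟨S, hcard, hgenS⟩ := Nat.sInf_mem ⟨s + p, hmem⟩
    rw [mdim, ← hcard]
    exact mdim_lower hm S hgenS

/-- The edge metric dimension of the construction. -/
lemma edim_eq (hm : 1 ≤ m) (hsp : 2 ≤ s + p) : edim (Gr s p m) = 2 * s + p := by
  have hmem : (2 * s + p) ∈ {k | ∃ S : Finset (Vt s p m),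
      S.card = k ∧ IsEdgeMetricGenerator (Gr s p m) ↑S} :=
    ⟨SE s p m, card_SE, SE_gen hsp⟩
  apply le_antisymm
  · exact Nat.sInf_le hmem
  · obtain ⟨S, hcard, hgenS⟩ := Nat.sInf_mem ⟨2 * s + p, hmem⟩
    rw [edim, ← hcard]
    exact edim_lower hm S hgenS

end Realization


open Realization

theorem realization_dim_edim (r t n : ℕ) (hr : 2 ≤ r) (hrt : r ≤ t) (ht : t ≤ 2 * r)
    (hn : 2 * r ≤ n - 2) :
    ∃ (V : Type) (_ : Fintype V) (G : SimpleGraph V), G.Connected ∧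
      Fintype.card V = n ∧ mdim G = r ∧ edim G = t := by
  have hn' : 2 * r + 2 ≤ n := by omega
  refine ⟨Vt (t - r) (2 * r - t) (n - 1 - t), inferInstance,
    Gr (t - r) (2 * r - t) (n - 1 - t), connected, ?_, ?_, ?_⟩
  · rw [card_Vt]; omega
  · rw [mdim_eq (by omega) (by omega)]; omega
  · rw [edim_eq (by omega) (by omega)]; omega
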